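/- Double robustness of ψ under a correct outcome law (second half of the proof of Proposition 4). Fix a distinguished element 0 ∈ 𝒴, let α(y,z,c) = log[ p(y | A=1, z, c) · p(0 | A=0, z, c) / ( p(y | A=0, z, c) · p(0 | A=1, z, c) ) ] be the true log odds-ratio function, and for g : 𝒴 × 𝒞 → ℝ define m_g(z,c) = ( Σ_y e^{α(y,z,c)} g(y,c) p(y | A=0, z, c) ) / ( Σ_y e^{α(y,z,c)} p(y | A=0, z, c) ). Then for every function β* : 𝒵 × 𝒞 → ℝ (an arbitrary, possibly misspecified, baseline propensity function): Σ_{a,y,z,c} p(a,y,z,c) · [ (1−a) · e^{α(y,z,c)+β*(z,c)} · ( g(y,c) − m_g(z,c) ) + a · m_g(z,c) ] = Σ_{a,y,z,c} p(a,y,z,c) · a · g(y,c). -/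

import Mathlib

lemma key_aux {Y : Type*} [Fintype Y] [Nonempty Y] (q : Bool → Y → ℝ)
    (hq : ∀ a y, 0 < q a y) (y₀ : Y) (gy : Y → ℝ) (b : ℝ) :
    let pc : Bool → Y → ℝ := fun a y => q a y / ∑ y' : Y, q a y'
    let α : Y → ℝ := fun y =>
      Real.log (pc true y * pc false y₀ / (pc false y * pc true y₀))
    let mg : ℝ := (∑ y : Y, Real.exp (α y) * gy y * pc false y)
        / (∑ y : Y, Real.exp (α y) * pc false y)
    (∑ y : Y, q false y * (Real.exp (α y + b) * (gy y - mg)) = 0) ∧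
    (∑ y : Y, q true y * mg = ∑ y : Y, q true y * gy y) := by
  intro pc α mg
  have hS : ∀ a, 0 < ∑ y' : Y, q a y' :=
    fun a => Finset.sum_pos (fun y _ => hq a y) Finset.univ_nonempty
  have hpc : ∀ a y, 0 < pc a y := fun a y => div_pos (hq a y) (hS a)
  set k : ℝ := pc false y₀ / pc true y₀ with hk
  have hkpos : 0 < k := div_pos (hpc false y₀) (hpc true y₀)
  have hexp : ∀ y, Real.exp (α y) = pc true y * k / pc false y := by
    intro y
    have : Real.exp (α y) = pc true y * pc false y₀ / (pc false y * pc true y₀) := by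
      apply Real.exp_log
      have h1 := hpc true y; have h2 := hpc false y₀
      have h3 := hpc false y; have h4 := hpc true y₀
      positivity
    rw [this, hk]
    field_simp
  have heq : ∀ y, Real.exp (α y) * pc false y = pc true y * k := by
    intro y
    rw [hexp y, div_mul_cancel₀ _ (hpc false y).ne']
  have hsum1 : ∑ y : Y, pc true y = 1 := by
    simp only [pc]
    rw [← Finset.sum_div]
    exact div_self (hS true).ne'
  have hden : ∑ y : Y, Real.exp (α y) * pc false y = k := by
    simp_rw [heq]
    rw [← Finset.sum_mul, hsum1, one_mul]
  have hnum : ∑ y : Y, Real.exp (α y) * gy y * pc false y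
      = k * ∑ y : Y, pc true y * gy y := by
    rw [Finset.mul_sum]
    refine Finset.sum_congr rfl fun y _ => ?_
    rw [mul_right_comm, heq]; ring
  have hmg : mg = ∑ y : Y, pc true y * gy y := by
    show (∑ y : Y, Real.exp (α y) * gy y * pc false y)
        / (∑ y : Y, Real.exp (α y) * pc false y) = _
    rw [hnum, hden, mul_div_cancel_left₀ _ hkpos.ne']
  have hqpc : ∀ a y, q a y = pc a y * (∑ y' : Y, q a y') := by
    intro a y
    simp only [pc]
    rw [div_mul_cancel₀ _ (hS a).ne']
  clear_value mg
  constructor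
  · have hterm : ∀ y, q false y * (Real.exp (α y + b) * (gy y - mg))
        = Real.exp b * ((∑ y' : Y, q false y') * k)
            * (pc true y * gy y - pc true y * mg) := by
      intro y
      have h1 := (hS false).ne'
      have h2 := (hS true).ne'
      have h3 := (hq false y).ne'
      have h4 := (hq true y₀).ne'
      have h5 := (hq false y₀).ne'
      have h6 := (hq true y).ne'
      rw [Real.exp_add, hexp y, hqpc false y]
      simp only [pc, hk]
      field_simp
    rw [Finset.sum_congr rfl fun y _ => hterm y, ← Finset.mul_sum]
    have : ∑ y : Y, (pc true y * gy y - pc true y * mg) = 0 := by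
      rw [Finset.sum_sub_distrib, ← Finset.sum_mul, hsum1, one_mul, hmg, sub_self]
    rw [this, mul_zero]
  · calc ∑ y : Y, q true y * mg = (∑ y : Y, q true y) * mg := by
          rw [Finset.sum_mul]
      _ = ∑ y : Y, pc true y * gy y * (∑ y' : Y, q true y') := by
          rw [hmg, ← Finset.sum_mul, mul_comm]
      _ = ∑ y : Y, q true y * gy y := by
          refine Finset.sum_congr rfl fun y _ => ?_
          rw [hqpc true y]; ring
theorem dr_correct_outcome_law
    {Y Z C : Type*} [Fintype Y] [Fintype Z] [Fintype C]
    [Nonempty Y] [Nonempty Z] [Nonempty C]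
    (p : Bool → Y → Z → C → ℝ)
    (hpos : ∀ a y z c, 0 < p a y z c)
    (hsum : ∑ a : Bool, ∑ y : Y, ∑ z : Z, ∑ c : C, p a y z c = 1)
    (y₀ : Y) (g : Y → C → ℝ) (β : Z → C → ℝ) :
    -- conditional pmf of `Y₀` given `A = a, Z = z, C = c`
    let pc : Bool → Y → Z → C → ℝ :=
      fun a y z c => p a y z c / ∑ y' : Y, p a y' z c
    -- true log generalized odds ratio
    let α : Y → Z → C → ℝ := fun y z c =>
      Real.log (pc true y z c * pc false y₀ z c / (pc false y z c * pc true y₀ z c))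
    -- odds-ratio weighted outcome regression `m_g(z,c)`
    let mg : Z → C → ℝ := fun z c =>
      (∑ y : Y, Real.exp (α y z c) * g y c * pc false y z c)
        / (∑ y : Y, Real.exp (α y z c) * pc false y z c)
    ∑ a : Bool, ∑ y : Y, ∑ z : Z, ∑ c : C,
      p a y z c *
        ((1 - if a then (1 : ℝ) else 0) * Real.exp (α y z c + β z c)
            * (g y c - mg z c)
          + (if a then (1 : ℝ) else 0) * mg z c)
      = ∑ a : Bool, ∑ y : Y, ∑ z : Z, ∑ c : C,
          p a y z c * (if a then (1 : ℝ) else 0) * g y c := by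
  intro pc α mg
  have swap : ∀ (F : Y → Z → C → ℝ),
      ∑ y : Y, ∑ z : Z, ∑ c : C, F y z c = ∑ z : Z, ∑ c : C, ∑ y : Y, F y z c := by
    intro F
    rw [Finset.sum_comm]
    exact Finset.sum_congr rfl fun z _ => Finset.sum_comm
  have key : ∀ z c,
      (∑ y : Y, p false y z c * (Real.exp (α y z c + β z c) * (g y c - mg z c)) = 0) ∧
      (∑ y : Y, p true y z c * mg z c = ∑ y : Y, p true y z c * g y c) := by
    intro z c
    exact key_aux (fun a y => p a y z c) (fun a y => hpos a y z c) y₀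
      (fun y => g y c) (β z c)
  simp only [Fintype.sum_bool, Bool.false_eq_true, if_true, if_false, sub_self, zero_mul, one_mul,
    mul_zero, mul_one, add_zero, zero_add, sub_zero, Finset.sum_const_zero]
  rw [swap (fun y z c => p true y z c * mg z c),
    swap (fun y z c => p false y z c * (Real.exp (α y z c + β z c) * (g y c - mg z c))),
    swap (fun y z c => p true y z c * g y c), ← Finset.sum_add_distrib]
  refine Finset.sum_congr rfl fun z _ => ?_
  rw [← Finset.sum_add_distrib]
  refine Finset.sum_congr rfl fun c _ => ?_
  rw [(key z c).1, (key z c).2, add_zero]
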